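/- For a nonzero submodule C ⊆ R^n over an Artinian local ring R, the minimum Hamming distance satisfies d_H(C) ≤ n − λ(C)/λ(R) + 1 and d_H(C) ≤ n − type(C)/type(R) + 1. -/

import Mathlib

open IsLocalRing

/-- Length of a module, as a natural number: the Krull dimension of its submodule lattice
(i.e. the supremum of lengths of chains of submodules). -/
noncomputable def lenN (R M : Type*) [CommRing R] [AddCommGroup M] [Module R M] : ℕ :=
  ((Order.krullDim (Submodule R M)).unbotD 0).toNat

/-- The socle of a module over a local ring: elements killed by the maximal ideal. -/
abbrev socle (R M : Type*) [CommRing R] [IsLocalRing R] [AddCommGroup M] [Module R M] :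
    Submodule R M :=
  Submodule.torsionBySet R M (maximalIdeal R)

/-- type(M) = dim_K soc(M), the dimension of the socle over the residue field K = R/m. -/
noncomputable def typeOf (R M : Type*) [CommRing R] [IsLocalRing R] [AddCommGroup M]
    [Module R M] : ℕ :=
  Module.finrank (R ⧸ maximalIdeal R) (socle R M)

/-- Minimal number of generators of a module. -/
noncomputable def mu (R M : Type*) [CommRing R] [AddCommGroup M] [Module R M] : ℕ :=
  sInf {k : ℕ | ∃ s : Finset M, s.card = k ∧ Submodule.span R (s : Set M) = ⊤}

/-- Free rank: the largest r admitting an R-linear surjection M → R^r. -/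
noncomputable def freeRank (R M : Type*) [CommRing R] [AddCommGroup M] [Module R M] : ℕ :=
  sSup {r : ℕ | ∃ f : M →ₗ[R] (Fin r → R), Function.Surjective f}

/-- An Artinian local ring is Frobenius if its socle is 1-dimensional over the residue field. -/
def IsFrobenius (R : Type*) [CommRing R] [IsLocalRing R] : Prop :=
  typeOf R R = 1

/-- The orthogonal (dual) code with respect to the standard bilinear form on R^n. -/
def dualCode {R : Type*} [CommRing R] {n : ℕ} (C : Submodule R (Fin n → R)) :
    Submodule R (Fin n → R) where
  carrier := {v | ∀ w ∈ C, ∑ i, v i * w i = 0}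
  zero_mem' := by intro w _; simp
  add_mem' := by
    intro a b ha hb w hw
    simpa [add_mul, Finset.sum_add_distrib] using by rw [ha w hw, hb w hw, add_zero]
  smul_mem' := by
    intro c a ha w hw
    simp only [Set.mem_setOf_eq] at ha ⊢
    simp [Pi.smul_apply, smul_eq_mul, mul_assoc, ← Finset.mul_sum, ha w hw]

/-- The submodule H_A of vectors of R^n supported on a set A of coordinates. -/
def suppCode (R : Type*) [CommRing R] {n : ℕ} (A : Finset (Fin n)) :
    Submodule R (Fin n → R) where
  carrier := {v | ∀ i, i ∉ A → v i = 0}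
  zero_mem' := by intro i _; simp
  add_mem' := by intro a b ha hb i hi; simp [ha i hi, hb i hi]
  smul_mem' := by intro c a ha i hi; simp [ha i hi]

open Classical in
/-- Hamming weight of a vector. -/
noncomputable def wt {R : Type*} [CommRing R] {n : ℕ} (v : Fin n → R) : ℕ :=
  (Finset.univ.filter (fun i => v i ≠ 0)).card

/-- Minimum Hamming distance (= minimum weight of a nonzero codeword) of a code. -/
noncomputable def dH {R : Type*} [CommRing R] {n : ℕ} (C : Submodule R (Fin n → R)) : ℕ :=
  sInf {w : ℕ | ∃ v ∈ C, v ≠ 0 ∧ wt v = w}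

/-- The coordinatewise reduction R^n → K^n modulo the maximal ideal. -/
def rho (R : Type*) [CommRing R] [IsLocalRing R] {n : ℕ} (v : Fin n → R) :
    Fin n → R ⧸ maximalIdeal R :=
  fun i => Ideal.Quotient.mk (maximalIdeal R) (v i)


section HeightHelpers


lemma myHeight_add_one_le {α : Type*} [Preorder α] {x y : α} (h : x < y) :
    Order.height x + 1 ≤ Order.height y := by
  rcases eq_or_ne (Order.height x) ⊤ with hx | hx
  · have hy : Order.height y = ⊤ := top_le_iff.mp (hx ▸ Order.height_mono h.le)
    simp [hy]
  · exact Order.add_one_le_of_lt (Order.height_strictMono h (lt_of_le_of_ne le_top hx))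

variable {R : Type*} [CommRing R] {M N : Type*} [AddCommGroup M] [AddCommGroup N]
  [Module R M] [Module R N]

lemma myHeight_le_of_injective (f : M →ₗ[R] N) (hf : Function.Injective f) :
    Order.height (⊤ : Submodule R M) ≤ Order.height (⊤ : Submodule R N) :=
  le_trans (Order.height_le_height_apply_of_strictMono _
      (Submodule.map_strictMono_of_injective hf) ⊤)
    (Order.height_mono le_top)

lemma myHeight_congr (e : M ≃ₗ[R] N) :
    Order.height (⊤ : Submodule R M) = Order.height (⊤ : Submodule R N) :=
  le_antisymm (myHeight_le_of_injective e.toLinearMap e.injective)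
    (myHeight_le_of_injective e.symm.toLinearMap e.symm.injective)

lemma comap_lt_or_map_lt {q q' : Submodule R (M × N)} (h : q < q') :
    q.comap (LinearMap.inl R M N) < q'.comap (LinearMap.inl R M N) ∨
      q.map (LinearMap.snd R M N) < q'.map (LinearMap.snd R M N) := by
  by_contra hc
  push_neg at hc
  obtain ⟨h1, h2⟩ := hc
  have hle := h.le
  have e1 : q.comap (LinearMap.inl R M N) = q'.comap (LinearMap.inl R M N) :=
    (Submodule.comap_mono hle).lt_or_eq.resolve_left h1
  have e2 : q.map (LinearMap.snd R M N) = q'.map (LinearMap.snd R M N) :=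
    (Submodule.map_mono hle).lt_or_eq.resolve_left h2
  refine h.ne (le_antisymm hle ?_)
  intro x hx
  have hx2 : x.2 ∈ q'.map (LinearMap.snd R M N) := ⟨x, hx, rfl⟩
  rw [← e2] at hx2
  obtain ⟨y, hy, hy2⟩ := hx2
  have hsub : x - y ∈ q' := sub_mem hx (hle hy)
  have h20 : x.2 - y.2 = 0 := by rw [show y.2 = x.2 from hy2, sub_self]
  have hfst : (x.1 - y.1, (0 : N)) ∈ q' := by
    have : ((x - y).1, (x - y).2) ∈ q' := hsub
    simpa [h20] using this
  have hfst' : x.1 - y.1 ∈ q'.comap (LinearMap.inl R M N) := by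
    simpa [Submodule.mem_comap] using hfst
  rw [← e1] at hfst'
  have hxyq : x - y ∈ q := by
    have : (x.1 - y.1, (0 : N)) ∈ q := by simpa [Submodule.mem_comap] using hfst'
    have h' : ((x - y).1, (x - y).2) ∈ q := by
      simpa [h20] using this
    exact h'
  simpa using add_mem hxyq hy

lemma myHeight_prod_le :
    Order.height (⊤ : Submodule R (M × N)) ≤
      Order.height (⊤ : Submodule R M) + Order.height (⊤ : Submodule R N) := by
  apply Order.height_le
  intro p _
  have key : ∀ i : Fin (p.length + 1), ((i : ℕ) : ℕ∞) ≤
      Order.height ((p i).comap (LinearMap.inl R M N)) +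
        Order.height ((p i).map (LinearMap.snd R M N)) := by
    intro i
    induction i using Fin.induction with
    | zero => simp
    | succ i ih =>
      have hlt : p i.castSucc < p i.succ := p.strictMono Fin.castSucc_lt_succ
      have hca := Submodule.comap_mono (f := LinearMap.inl R M N) hlt.le
      have hma := Submodule.map_mono (f := LinearMap.snd R M N) hlt.le
      have hcast : ((i.succ : ℕ) : ℕ∞) = ((i.castSucc : ℕ) : ℕ∞) + 1 := by
        simp [Fin.val_succ, Fin.coe_castSucc]
      rcases comap_lt_or_map_lt hlt with hc | hc
      · calc ((i.succ : ℕ) : ℕ∞) = ((i.castSucc : ℕ) : ℕ∞) + 1 := hcast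
          _ ≤ (Order.height ((p i.castSucc).comap (LinearMap.inl R M N)) +
              Order.height ((p i.castSucc).map (LinearMap.snd R M N))) + 1 :=
            add_le_add_left ih 1
          _ = (Order.height ((p i.castSucc).comap (LinearMap.inl R M N)) + 1) +
              Order.height ((p i.castSucc).map (LinearMap.snd R M N)) := by ring
          _ ≤ _ := add_le_add (myHeight_add_one_le hc) (Order.height_mono hma)
      · calc ((i.succ : ℕ) : ℕ∞) = ((i.castSucc : ℕ) : ℕ∞) + 1 := hcast
          _ ≤ (Order.height ((p i.castSucc).comap (LinearMap.inl R M N)) +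
              Order.height ((p i.castSucc).map (LinearMap.snd R M N))) + 1 :=
            add_le_add_left ih 1
          _ = Order.height ((p i.castSucc).comap (LinearMap.inl R M N)) +
              (Order.height ((p i.castSucc).map (LinearMap.snd R M N)) + 1) := by ring
          _ ≤ _ := add_le_add (Order.height_mono hca) (myHeight_add_one_le hc)
  have hlast := key (Fin.last _)
  calc (p.length : ℕ∞) = ((Fin.last p.length : ℕ) : ℕ∞) := by simp
    _ ≤ _ := hlast
    _ ≤ _ := add_le_add (Order.height_mono le_top) (Order.height_mono le_top)


end HeightHelpers

section PiHelpers
variable {R : Type*} [CommRing R] {M N : Type*} [AddCommGroup M] [AddCommGroup N]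
  [Module R M] [Module R N]

/-- `Fin (m+1) → R` is linearly equivalent to `R × (Fin m → R)`. -/
def myPiSuccEquiv (R : Type*) [CommRing R] (m : ℕ) :
    (Fin (m + 1) → R) ≃ₗ[R] R × (Fin m → R) :=
  { (Fin.consEquiv fun _ => R).symm with
    map_add' := fun _ _ => rfl
    map_smul' := fun _ _ => rfl }

lemma myHeight_pi_le (R : Type*) [CommRing R] (m : ℕ) :
    Order.height (⊤ : Submodule R (Fin m → R)) ≤
      (m : ℕ∞) * Order.height (⊤ : Submodule R R) := by
  induction m with
  | zero =>
    have hmin : IsMin (⊤ : Submodule R (Fin 0 → R)) := by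
      intro b _
      intro x _
      rw [Subsingleton.elim x 0]
      exact b.zero_mem
    rw [Order.height_eq_zero.mpr hmin]
    simp
  | succ m ih =>
    calc Order.height (⊤ : Submodule R (Fin (m + 1) → R))
        = Order.height (⊤ : Submodule R (R × (Fin m → R))) :=
          myHeight_congr (myPiSuccEquiv R m)
      _ ≤ Order.height (⊤ : Submodule R R) + Order.height (⊤ : Submodule R (Fin m → R)) :=
          myHeight_prod_le
      _ ≤ Order.height (⊤ : Submodule R R) + (m : ℕ∞) * Order.height (⊤ : Submodule R R) :=
          add_le_add_right ih _
      _ = ((m + 1 : ℕ) : ℕ∞) * Order.height (⊤ : Submodule R R) := by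
          push_cast; ring

lemma myHeight_pi_le' (R : Type*) [CommRing R] (σ : Type*) [Fintype σ] :
    Order.height (⊤ : Submodule R (σ → R)) ≤
      ((Fintype.card σ : ℕ) : ℕ∞) * Order.height (⊤ : Submodule R R) := by
  have e := LinearEquiv.funCongrLeft R R (Fintype.equivFin σ)
  calc Order.height (⊤ : Submodule R (σ → R))
      = Order.height (⊤ : Submodule R (Fin (Fintype.card σ) → R)) :=
        (myHeight_congr e).symm
    _ ≤ _ := myHeight_pi_le R _

lemma lenN_eq_toNat (R M : Type*) [CommRing R] [AddCommGroup M] [Module R M] :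
    lenN R M = (Order.height (⊤ : Submodule R M)).toNat := by
  rw [lenN, ← Order.height_top_eq_krullDim, WithBot.unbotD_coe]


end PiHelpers

section SocleHelpers

variable {R : Type*} [CommRing R] [IsLocalRing R] {M N : Type*} [AddCommGroup M] [AddCommGroup N]
  [Module R M] [Module R N]

lemma mem_socle_iff {x : M} : x ∈ socle R M ↔ ∀ a ∈ maximalIdeal R, a • x = 0 := by
  rw [Submodule.mem_torsionBySet_iff]
  exact ⟨fun h a ha => h ⟨a, ha⟩, fun h a => h a.1 a.2⟩

/-- An injective `R`-linear map induces a `K`-linear map on socles. -/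
noncomputable def socleMap (f : M →ₗ[R] N) :
    socle R M →ₗ[R ⧸ maximalIdeal R] socle R N where
  toFun x := ⟨f x.1, by
    rw [mem_socle_iff]
    intro a ha
    have hx := mem_socle_iff.mp x.2 a ha
    rw [← map_smul, hx, map_zero]⟩
  map_add' x y := Subtype.ext (by simp)
  map_smul' k x := by
    obtain ⟨r, rfl⟩ := Ideal.Quotient.mk_surjective k
    apply Subtype.ext
    simp only [RingHom.id_apply]
    rw [Submodule.torsionBySet.mk_smul, Submodule.torsionBySet.mk_smul]
    simp [map_smul]

lemma socleMap_injective (f : M →ₗ[R] N) (hf : Function.Injective f) :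
    Function.Injective (socleMap f) := by
  intro x y hxy
  exact Subtype.ext (hf (congrArg Subtype.val hxy))

/-- Socle of a product of copies of `R`. -/
noncomputable def soclePiEquiv (σ : Type*) :
    socle R (σ → R) ≃ₗ[R ⧸ maximalIdeal R] (σ → socle R R) where
  toFun x i := ⟨x.1 i, by
    rw [mem_socle_iff]
    intro a ha
    have hx := mem_socle_iff.mp x.2 a ha
    exact congrFun hx i⟩
  invFun v := ⟨fun i => (v i).1, by
    rw [mem_socle_iff]
    intro a ha
    funext i
    exact mem_socle_iff.mp (v i).2 a ha⟩
  map_add' x y := funext fun i => Subtype.ext rfl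
  map_smul' k x := by
    obtain ⟨r, rfl⟩ := Ideal.Quotient.mk_surjective k
    funext i
    apply Subtype.ext
    simp only [RingHom.id_apply, Pi.smul_apply]
    rw [Submodule.torsionBySet.mk_smul, Submodule.torsionBySet.mk_smul]
    rfl
  left_inv x := Subtype.ext rfl
  right_inv v := funext fun i => Subtype.ext rfl

lemma finite_socle (M : Type*) [AddCommGroup M] [Module R M] [IsArtinian R M] :
    Module.Finite (R ⧸ maximalIdeal R) (socle R M) := by
  letI : Field (R ⧸ maximalIdeal R) := Ideal.Quotient.field _
  have h1 : IsArtinian R (socle R M) := inferInstance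
  have h2 : IsArtinian (R ⧸ maximalIdeal R) (socle R M) := isArtinian_of_tower R h1
  exact (IsSemisimpleModule.finite_tfae.out 2 0).mp h2

lemma typeOf_pi (σ : Type*) [Fintype σ] [IsArtinianRing R] :
    typeOf R (σ → R) = Fintype.card σ * typeOf R R := by
  letI : Field (R ⧸ maximalIdeal R) := Ideal.Quotient.field _
  have : Module.Finite (R ⧸ maximalIdeal R) (socle R R) := finite_socle R
  rw [typeOf, (soclePiEquiv σ).finrank_eq, Module.finrank_pi_fintype, Finset.sum_const,
    Finset.card_univ, smul_eq_mul, typeOf]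

lemma typeOf_le_of_injective (f : M →ₗ[R] N) (hf : Function.Injective f)
    [IsArtinian R N] : typeOf R M ≤ typeOf R N := by
  letI : Field (R ⧸ maximalIdeal R) := Ideal.Quotient.field _
  have : Module.Finite (R ⧸ maximalIdeal R) (socle R N) := finite_socle N
  exact LinearMap.finrank_le_finrank_of_injective (f := socleMap f) (socleMap_injective f hf)


end SocleHelpers

section WtHelpers

open Classical in
lemma wt_le_card {R : Type*} [CommRing R] {n : ℕ} {v : Fin n → R} {T : Finset (Fin n)}
    (h : ∀ i, i ∉ T → v i = 0) : wt v ≤ T.card := by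
  unfold wt
  apply Finset.card_le_card
  intro i hi
  rw [Finset.mem_filter] at hi
  by_contra hiT
  exact hi.2 (h i hiT)

open Classical in
lemma one_le_wt {R : Type*} [CommRing R] {n : ℕ} {v : Fin n → R} (hv : v ≠ 0) : 1 ≤ wt v := by
  obtain ⟨i, hi⟩ := Function.ne_iff.mp hv
  unfold wt
  exact Finset.card_pos.mpr ⟨i, Finset.mem_filter.mpr ⟨Finset.mem_univ _, hi⟩⟩

open Classical in
lemma wt_le_n {R : Type*} [CommRing R] {n : ℕ} (v : Fin n → R) : wt v ≤ n := by
  unfold wt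
  exact (Finset.card_filter_le _ _).trans (by simp)

end WtHelpers

/-- Singleton-type bounds d_H(C) ≤ n − λ(C)/λ(R) + 1 and
d_H(C) ≤ n − type(C)/type(R) + 1 over an Artinian local ring. -/
theorem stmt14 (R : Type*) [CommRing R] [IsLocalRing R] [IsArtinianRing R]
    {n : ℕ} (C : Submodule R (Fin n → R)) (hC : C ≠ ⊥) :
    (dH C : ℚ) ≤ n - (lenN R C : ℚ) / (lenN R R : ℚ) + 1 ∧
      (dH C : ℚ) ≤ n - (typeOf R C : ℚ) / (typeOf R R : ℚ) + 1 := by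
  classical
  have hSne : {w : ℕ | ∃ v ∈ C, v ≠ 0 ∧ wt v = w}.Nonempty := by
    obtain ⟨v, hvC, hvne⟩ := (Submodule.ne_bot_iff C).mp hC
    exact ⟨wt v, v, hvC, hvne, rfl⟩
  obtain ⟨v, hvC, hvne, hwt⟩ : dH C ∈ {w : ℕ | ∃ v ∈ C, v ≠ 0 ∧ wt v = w} := Nat.sInf_mem hSne
  have hd1 : 1 ≤ dH C := hwt ▸ one_le_wt hvne
  have hdn : dH C ≤ n := hwt ▸ wt_le_n v
  obtain ⟨T, -, hTcard⟩ := Finset.exists_subset_card_eq (s := (Finset.univ : Finset (Fin n))) (n := dH C - 1)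
    (by simp only [Finset.card_univ, Fintype.card_fin]; omega)
  have hBcard : Tᶜ.card = n - (dH C - 1) := by
    rw [Finset.card_compl, hTcard, Fintype.card_fin]
  have hkey : Tᶜ.card + dH C = n + 1 := by omega
  let f : C →ₗ[R] ({i // i ∈ Tᶜ} → R) :=
    (LinearMap.funLeft R R (fun j : {i // i ∈ Tᶜ} => (j : Fin n))).comp C.subtype
  have hker : ∀ c : C, f c = 0 → c = 0 := by
    intro c hc0
    by_contra hcne
    have hc1ne : (c : Fin n → R) ≠ 0 := by
      intro h
      exact hcne (by simpa using Subtype.ext h)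
    have hzero : ∀ i, i ∉ T → (c : Fin n → R) i = 0 := by
      intro i hiT
      have hiB : i ∈ Tᶜ := Finset.mem_compl.mpr hiT
      exact congrFun hc0 ⟨i, hiB⟩
    have hge : dH C ≤ wt (c : Fin n → R) :=
      Nat.sInf_le ⟨(c : Fin n → R), c.2, hc1ne, rfl⟩
    have hle : wt (c : Fin n → R) ≤ dH C - 1 := hTcard ▸ wt_le_card hzero
    omega
  have hfinj : Function.Injective f := by
    intro c c' h
    have := hker (c - c') (by rw [map_sub, h, sub_self])
    rwa [sub_eq_zero] at this
  -- length bound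
  have hlen : lenN R R = 0 ∨ lenN R C ≤ Tᶜ.card * lenN R R := by
    rcases eq_or_ne (Order.height (⊤ : Submodule R R)) ⊤ with htop | htop
    · left
      rw [lenN_eq_toNat, htop]
      simp
    · right
      have h1 : Order.height (⊤ : Submodule R C) ≤
          (Tᶜ.card : ℕ∞) * Order.height (⊤ : Submodule R R) :=
        le_trans (myHeight_le_of_injective f hfinj)
          (by simpa only [Fintype.card_coe] using myHeight_pi_le' R {i // i ∈ Tᶜ})
      have h2 : ((Tᶜ.card * lenN R R : ℕ) : ℕ∞) =
          (Tᶜ.card : ℕ∞) * Order.height (⊤ : Submodule R R) := by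
        rw [lenN_eq_toNat]
        push_cast
        rw [ENat.coe_toNat htop]
      rw [lenN_eq_toNat]
      exact ENat.toNat_le_of_le_coe (h1.trans_eq h2.symm)
  -- type bound
  have htype : typeOf R C ≤ Tᶜ.card * typeOf R R := by
    have h1 : typeOf R C ≤ typeOf R ({i // i ∈ Tᶜ} → R) := typeOf_le_of_injective f hfinj
    have h2 : typeOf R ({i // i ∈ Tᶜ} → R) = Tᶜ.card * typeOf R R := by
      rw [typeOf_pi, Fintype.card_coe]
    omega
  have hdnQ : (dH C : ℚ) ≤ n := by exact_mod_cast hdn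
  have hkeyQ : (Tᶜ.card : ℚ) + dH C = n + 1 := by exact_mod_cast hkey
  constructor
  · rcases hlen with h0 | hle
    · rw [h0]
      simp only [Nat.cast_zero, div_zero]
      linarith
    · rcases Nat.eq_zero_or_pos (lenN R R) with h0 | hpos
      · rw [h0]
        simp only [Nat.cast_zero, div_zero]
        linarith
      · have hposQ : (0 : ℚ) < lenN R R := by exact_mod_cast hpos
        have hq : (lenN R C : ℚ) / (lenN R R : ℚ) ≤ Tᶜ.card := by
          rw [div_le_iff₀ hposQ]
          exact_mod_cast hle
        linarith
  · rcases Nat.eq_zero_or_pos (typeOf R R) with h0 | hpos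
    · rw [h0]
      simp only [Nat.cast_zero, div_zero]
      linarith
    · have hposQ : (0 : ℚ) < typeOf R R := by exact_mod_cast hpos
      have hq : (typeOf R C : ℚ) / (typeOf R R : ℚ) ≤ Tᶜ.card := by
        rw [div_le_iff₀ hposQ]
        exact_mod_cast htype
      linarith
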